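/- Let P(X) = Σ_{k=0}^d X^k a_k be a quaternionic polynomial with |P(x)| ≤ M for all |x| = 1. Then for every x ∈ ℍ with |x| = 1, writing x₀ = Re(x), one has |Σ_{k=0}^{d-1} (U_k(x₀) − x̄ U_{k-1}(x₀)) (k+1) a_{k+1}| ≤ d·M, where U_k are the Chebyshev polynomials of the second kind (U_{-1} := 0). -/

import Mathlib

namespace BernAux
open Quaternion Finset Polynomial


lemma cheb_pow (x : Quaternion ℝ) (hx : ‖x‖ = 1) (k : ℕ) :
    x ^ k = (((Polynomial.Chebyshev.U ℝ (k : ℤ)).eval x.re : ℝ) : Quaternion ℝ)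
      - star x * (((Polynomial.Chebyshev.U ℝ ((k : ℤ) - 1)).eval x.re : ℝ) : Quaternion ℝ) := by
  have hns : (normSq x : ℝ) = 1 := by
    rw [Quaternion.normSq_eq_norm_mul_self, hx, one_mul]
  have hsx : star x * x = 1 := by rw [Quaternion.star_mul_self, hns]; norm_num
  induction k with
  | zero => simp [Polynomial.Chebyshev.U_zero, Polynomial.Chebyshev.U_neg_one]
  | succ n ih =>
    have hrec := Polynomial.Chebyshev.U_add_two ℝ ((n : ℤ) - 1)
    rw [show (n:ℤ) - 1 + 2 = (n:ℤ) + 1 by ring, show (n:ℤ) - 1 + 1 = (n:ℤ) by ring] at hrec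
    have hx2 : x = 2 * (x.re : Quaternion ℝ) - star x :=
      eq_sub_of_add_eq (Quaternion.self_add_star x)
    rw [pow_succ, ih]
    rw [show ((n + 1 : ℕ) : ℤ) = (n : ℤ) + 1 by push_cast; ring,
        show ((n:ℤ) + 1 - 1) = (n : ℤ) by ring, hrec]
    set A : Quaternion ℝ := (((Polynomial.Chebyshev.U ℝ (n:ℤ)).eval x.re : ℝ) : Quaternion ℝ) with hA
    set B : Quaternion ℝ := (((Polynomial.Chebyshev.U ℝ ((n:ℤ)-1)).eval x.re : ℝ) : Quaternion ℝ) with hB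
    have hAx : A * x = x * A := Quaternion.coe_commutes _ x
    have hBx : B * x = x * B := Quaternion.coe_commutes _ x
    have hcast : (((2 * Polynomial.X * Polynomial.Chebyshev.U ℝ (n:ℤ)
        - Polynomial.Chebyshev.U ℝ ((n:ℤ)-1)).eval x.re : ℝ) : Quaternion ℝ)
        = 2 * (x.re : Quaternion ℝ) * A - B := by
      simp only [Polynomial.eval_sub, Polynomial.eval_mul, Polynomial.eval_X, Polynomial.eval_ofNat, hA, hB]
      push_cast
      have h2 : ((2:ℝ) : Quaternion ℝ) = 2 := by norm_cast
      rw [h2]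
    rw [hcast]
    calc (A - star x * B) * x = x * A - star x * x * B := by
          rw [sub_mul, mul_assoc, hBx, hAx, ← mul_assoc]
      _ = x * A - B := by rw [hsx, one_mul]
      _ = (2 * (x.re : Quaternion ℝ) - star x) * A - B := by rw [← hx2]
      _ = 2 * (x.re : Quaternion ℝ) * A - B - star x * A := by noncomm_ring


noncomputable def E (u : Quaternion ℝ) (s : ℝ) : Quaternion ℝ :=
  ((Real.cos s : ℝ) : Quaternion ℝ) + (Real.sin s) • u

lemma smul_neg_one (r : ℝ) : r • (-1 : Quaternion ℝ) = ((-r : ℝ) : Quaternion ℝ) := by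
  rw [smul_neg]
  have : r • (1 : Quaternion ℝ) = ((r:ℝ) : Quaternion ℝ) * 1 := (Quaternion.coe_mul_eq_smul r 1).symm
  rw [this, mul_one]
  push_cast
  ring

lemma E_add {u : Quaternion ℝ} (huu : u * u = -1) (s t : ℝ) :
    E u s * E u t = E u (s + t) := by
  unfold E
  rw [Real.cos_add, Real.sin_add]
  rw [add_mul, mul_add, mul_add, ← Quaternion.coe_mul,
      mul_smul_comm, smul_mul_assoc, smul_mul_assoc,
      Quaternion.coe_mul_eq_smul, Quaternion.mul_coe_eq_smul,
      mul_smul_comm, huu, smul_smul, smul_smul, smul_smul, smul_neg_one]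
  push_cast
  module

lemma E_zero (u : Quaternion ℝ) : E u 0 = 1 := by
  simp [E]

lemma E_pow {u : Quaternion ℝ} (huu : u * u = -1) (s : ℝ) (n : ℕ) :
    (E u s) ^ n = E u (n * s) := by
  induction n with
  | zero => simpa using (E_zero u).symm
  | succ m ih =>
    rw [pow_succ, ih, E_add huu]
    congr 1
    push_cast
    ring

lemma E_re {u : Quaternion ℝ} (hure : u.re = 0) (s : ℝ) : (E u s).re = Real.cos s := by
  simp [E, hure]

lemma star_u {u : Quaternion ℝ} (hure : u.re = 0) : star u = -u := by
  ext <;> simp [hure]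

lemma star_E {u : Quaternion ℝ} (hure : u.re = 0) (s : ℝ) : star (E u s) = E u (-s) := by
  unfold E
  rw [star_add, Quaternion.star_smul, star_u hure, Quaternion.star_coe]
  simp [Real.cos_neg, Real.sin_neg]

lemma E_norm {u : Quaternion ℝ} (huu : u * u = -1) (hure : u.re = 0) (s : ℝ) :
    ‖E u s‖ = 1 := by
  have h1 : E u s * star (E u s) = 1 := by
    rw [star_E hure, E_add huu, add_neg_cancel, E_zero]
  have h2 : ((normSq (E u s) : ℝ) : Quaternion ℝ) = 1 := by
    rw [← Quaternion.self_mul_star]; exact h1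
  have h3 : normSq (E u s) = 1 := by
    have := Quaternion.coe_injective (by rw [h2]; norm_cast : ((normSq (E u s) : ℝ) : Quaternion ℝ) = ((1:ℝ) : Quaternion ℝ))
    exact this
  have h4 := Quaternion.normSq_eq_norm_mul_self (E u s)
  nlinarith [norm_nonneg (E u s)]

lemma E_commute {u x : Quaternion ℝ} (hux : u * x = x * u) (s : ℝ) :
    E u s * x = x * E u s := by
  unfold E
  rw [add_mul, mul_add, Quaternion.coe_mul_eq_smul, Quaternion.mul_coe_eq_smul,
      smul_mul_assoc, mul_smul_comm, hux]

lemma geom_zero {z : Quaternion ℝ} (N : ℕ) (hzN : z ^ N = 1) (hz : z ≠ 1) :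
    ∑ j ∈ range N, z ^ j = 0 := by
  have h := geom_sum_mul z N
  rw [hzN, sub_self] at h
  rcases mul_eq_zero.mp h with h' | h'
  · exact h'
  · exact absurd (sub_eq_zero.mp h') hz



lemma count_pq {β : Type*} [AddCommMonoid β] (d k : ℕ) (hk : k ≤ d) (y : β) :
    ∑ p ∈ range d, ∑ q ∈ range d, (if p + k = d + q then y else 0) = k • y := by
  have h1 : ∀ p ∈ range d, (∑ q ∈ range d, if p + k = d + q then y else 0)
      = if d ≤ p + k then y else 0 := by
    intro p hp
    rw [mem_range] at hp
    by_cases hd : d ≤ p + k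
    · have hcond : ∀ q, (p + k = d + q) = (q = p + k - d) := fun q => propext (by omega)
      simp only [hcond]
      rw [Finset.sum_ite_eq' (range d) (p + k - d) (fun _ => y)]
      have : p + k - d ∈ range d := by rw [mem_range]; omega
      simp [this, hd]
    · have hcond : ∀ q ∈ range d, (if p + k = d + q then y else 0) = 0 := by
        intro q hq; rw [mem_range] at hq; rw [if_neg (by omega)]
      rw [Finset.sum_congr rfl hcond]
      simp [hd]
  rw [Finset.sum_congr rfl h1, Finset.sum_ite, Finset.sum_const, Finset.sum_const,
    smul_zero, add_zero]
  congr 1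
  have : (range d).filter (fun p => d ≤ p + k) = Finset.Ico (d - k) d := by
    ext p; simp [Finset.mem_Ico]; omega
  rw [this, Nat.card_Ico]
  omega

lemma count_diag {β : Type*} [AddCommMonoid β] (d : ℕ) (y : β) :
    ∑ p ∈ range d, ∑ q ∈ range d, (if (p : ℤ) - q = 0 then y else 0) = d • y := by
  have h1 : ∀ p ∈ range d, (∑ q ∈ range d, if (p:ℤ) - q = 0 then y else 0) = y := by
    intro p hp
    have hcond : ∀ q : ℕ, ((p:ℤ) - (q:ℤ) = 0) = (q = p) := fun q => propext (by omega)
    simp only [hcond]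
    rw [Finset.sum_ite_eq' (range d) p (fun _ => y)]
    simp [hp]
  rw [Finset.sum_congr rfl h1, Finset.sum_const, Finset.card_range]


lemma geom_E {u : Quaternion ℝ} (huu : u * u = -1) (hure : u.re = 0)
    (N : ℕ) (hN : 0 < N) (c : ℤ) (hc : c.natAbs < N) :
    ∑ j ∈ range N, (E u ((c : ℝ) * (2 * Real.pi / N))) ^ j
      = if c = 0 then (N • (1 : Quaternion ℝ)) else 0 := by
  set θ : ℝ := 2 * Real.pi / N with hθ
  by_cases hc0 : c = 0
  · subst hc0
    simp [E_zero u]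
  · rw [if_neg hc0]
    apply geom_zero N
    · rw [E_pow huu]
      have hNne : (N : ℝ) ≠ 0 := Nat.cast_ne_zero.mpr hN.ne'
      have harg : (N : ℝ) * ((c : ℝ) * θ) = (c : ℝ) * (2 * Real.pi) := by
        rw [hθ]; field_simp
      rw [harg]
      unfold E
      rw [Real.cos_int_mul_two_pi]
      have hs : Real.sin ((c:ℝ) * (2 * Real.pi)) = 0 := by
        have := Real.sin_int_mul_pi (2 * c)
        have harg2 : ((2 * c : ℤ) : ℝ) * Real.pi = (c : ℝ) * (2 * Real.pi) := by push_cast; ring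
        rwa [harg2] at this
      rw [hs]
      simp
    · intro h1
      have hre := congrArg QuaternionAlgebra.re h1
      rw [E_re hure] at hre
      have hone : (1 : Quaternion ℝ).re = 1 := rfl
      rw [hone] at hre
      rcases (Real.cos_eq_one_iff _).mp hre with ⟨n, hn⟩
      have hNne : (N : ℝ) ≠ 0 := Nat.cast_ne_zero.mpr hN.ne'
      have hpi : Real.pi ≠ 0 := Real.pi_ne_zero
      have h2pi : (2 * Real.pi) ≠ 0 := by positivity
      have hnN : (n:ℝ) * (N:ℝ) = (c:ℝ) := by
        have h5 : ((n:ℝ) * (2*Real.pi)) * N = ((c:ℝ) * θ) * N := by rw [hn]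
        rw [hθ] at h5
        have h6 : (c:ℝ) * (2*Real.pi/(N:ℝ)) * N = (c:ℝ) * (2*Real.pi) := by field_simp
        rw [h6] at h5
        exact mul_right_cancel₀ h2pi (by linear_combination h5)
      have hnNc : n * (N : ℤ) = c := by exact_mod_cast hnN
      have hn0 : n ≠ 0 := by rintro rfl; simp at hnNc; exact hc0 hnNc.symm
      have hle : N ≤ (n * (N:ℤ)).natAbs := by
        rw [Int.natAbs_mul, Int.natAbs_natCast]
        have h1 : 1 ≤ n.natAbs := Int.natAbs_pos.mpr hn0
        calc N = 1 * N := (one_mul N).symm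
          _ ≤ n.natAbs * N := Nat.mul_le_mul_right N h1
      rw [hnNc] at hle
      omega

lemma x_eq_E (x : Quaternion ℝ) (hx : ‖x‖ = 1) :
    ∃ u : Quaternion ℝ, u.re = 0 ∧ u * u = -1 ∧ x = E u (Real.arccos x.re) := by
  classical
  have hns : normSq x = 1 := by
    rw [Quaternion.normSq_eq_norm_mul_self, hx]; norm_num
  have hsplit : normSq x = x.re ^ 2 + normSq x.im := by
    rw [Quaternion.normSq_def', Quaternion.normSq_def']
    simp [QuaternionAlgebra.im]
    ring
  have him_sq : normSq x.im = 1 - x.re ^ 2 := by rw [hsplit] at hns; linarith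
  have hre_le : x.re ^ 2 ≤ 1 := by nlinarith [Quaternion.normSq_nonneg (a := x.im)]
  set u : Quaternion ℝ := if x.im = 0 then ((Quaternion.equivProd ℝ).symm (0, 1, 0, 0) : Quaternion ℝ) else ‖x.im‖⁻¹ • x.im with hu
  have hure : u.re = 0 := by
    rw [hu]; split
    · rfl
    · rw [Quaternion.re_smul, Quaternion.re_im]; simp
  have huns : normSq u = 1 := by
    rw [hu]; split
    · rw [Quaternion.normSq_def']; norm_num
    · rename_i h
      rw [Quaternion.normSq_smul, Quaternion.normSq_eq_norm_mul_self]
      have hnz : ‖x.im‖ ≠ 0 := norm_ne_zero_iff.mpr h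
      field_simp
  have hstaru : star u = -u := by
    ext <;> simp [hure]
  have huu : u * u = -1 := by
    have h1 : star u * u = ((normSq u : ℝ) : Quaternion ℝ) := Quaternion.star_mul_self u
    rw [hstaru, huns, neg_mul] at h1
    have h2 : u * u = - ((1:ℝ) : Quaternion ℝ) := by rw [← neg_neg (u*u), h1]
    rw [h2]; norm_cast
  refine ⟨u, hure, huu, ?_⟩
  have hsmul : ‖x.im‖ • u = x.im := by
    rw [hu]; split
    · rename_i h; rw [h]; simp
    · rename_i h
      rw [smul_smul]
      have hnz : ‖x.im‖ ≠ 0 := norm_ne_zero_iff.mpr h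
      rw [mul_inv_cancel₀ hnz, one_smul]
  have hcos : Real.cos (Real.arccos x.re) = x.re :=
    Real.cos_arccos (by nlinarith) (by nlinarith)
  have hsin : Real.sin (Real.arccos x.re) = ‖x.im‖ := by
    rw [Real.sin_arccos, ← him_sq, Quaternion.normSq_eq_norm_mul_self,
      Real.sqrt_mul_self (norm_nonneg x.im)]
  unfold E
  rw [hcos, hsin, hsmul]
  exact (Quaternion.re_add_im x).symm


lemma re_sum (s : Finset ℕ) (f : ℕ → Quaternion ℝ) :
    (∑ j ∈ s, f j).re = ∑ j ∈ s, (f j).re := by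
  induction s using Finset.cons_induction with
  | empty => simp
  | cons j s hj ih => rw [Finset.sum_cons, Finset.sum_cons, Quaternion.re_add, ih]

lemma key_bound (d : ℕ) (a : ℕ → Quaternion ℝ) (M : ℝ)
    (hM : ∀ y : Quaternion ℝ, ‖y‖ = 1 → ‖∑ k ∈ range (d + 1), y ^ k * a k‖ ≤ M)
    (x : Quaternion ℝ) (hx : ‖x‖ = 1) :
    ‖∑ k ∈ range (d + 1), ((k : ℕ) : Quaternion ℝ) * (x ^ k * a k)‖ ≤ d * M := by
  obtain ⟨u, hure, huu, hxE⟩ := x_eq_E x hx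
  set N : ℕ := 2 * d + 1 with hN
  have hNpos : 0 < N := by omega
  set θ : ℝ := 2 * Real.pi / N with hθ
  set φ : ℝ := Real.arccos x.re with hφ
  set c : ℕ → ℕ → ℕ → ℤ := fun p q k => (p : ℤ) + (k : ℤ) - ((d : ℤ) + (q : ℤ)) with hc
  set Dj : ℕ → Quaternion ℝ :=
    fun j => ∑ p ∈ range d, E u ((p : ℝ) * ((j : ℝ) * θ)) with hDj
  set Pj : ℕ → Quaternion ℝ :=
    fun j => ∑ k ∈ range (d + 1), (x * E u ((j : ℝ) * θ)) ^ k * a k with hPj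
  set S : Quaternion ℝ :=
    ∑ j ∈ range N, E u (-((d : ℝ) * ((j : ℝ) * θ))) * (Dj j * star (Dj j)) * Pj j with hS
  have hstarD : ∀ j : ℕ, star (Dj j) = ∑ q ∈ range d, E u (-((q : ℝ) * ((j : ℝ) * θ))) := by
    intro j
    simp only [hDj]
    rw [star_sum]
    exact Finset.sum_congr rfl fun q _ => star_E hure _
  -- Step 1: expand each summand of S
  have hterm : ∀ j ∈ range N,
      E u (-((d : ℝ) * ((j : ℝ) * θ))) * (Dj j * star (Dj j)) * Pj j
      = ∑ k ∈ range (d + 1), ∑ p ∈ range d, ∑ q ∈ range d,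
          x ^ k * (E u ((c p q k : ℝ) * θ)) ^ j * a k := by
    intro j _
    rw [hstarD j]
    simp only [hDj, hPj]
    rw [Finset.sum_mul_sum]
    simp only [Finset.mul_sum, Finset.sum_mul]
    refine Finset.sum_congr rfl fun k _ => Finset.sum_congr rfl fun p _ =>
      Finset.sum_congr rfl fun q _ => ?_
    have hxk : (x * E u ((j : ℝ) * θ)) ^ k = E u ((k : ℝ) * (φ + (j : ℝ) * θ)) := by
      rw [hxE, E_add huu, E_pow huu]
    have hxpow : x ^ k = E u ((k : ℝ) * φ) := by rw [hxE, E_pow huu]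
    have hzj : (E u ((c p q k : ℝ) * θ)) ^ j = E u ((j : ℝ) * ((c p q k : ℝ) * θ)) :=
      E_pow huu _ j
    rw [hxk, hxpow, hzj]
    simp only [E_add huu, ← mul_assoc]
    congr 2
    simp only [hc]
    push_cast
    ring
  -- Step 2: swap sums and compute geometric sums
  have hgeo : ∀ p ∈ range d, ∀ q ∈ range d, ∀ k ∈ range (d + 1),
      (∑ j ∈ range N, (E u ((c p q k : ℝ) * θ)) ^ j)
        = if c p q k = 0 then (N • (1 : Quaternion ℝ)) else 0 := by
    intro p hp q hq k hk
    rw [mem_range] at hp hq hk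
    rw [hθ]
    exact geom_E huu hure N hNpos (c p q k) (by simp only [hc]; omega)
  have hSid : S = ∑ k ∈ range (d + 1), ∑ p ∈ range d, ∑ q ∈ range d,
      x ^ k * (if c p q k = 0 then (N • (1 : Quaternion ℝ)) else 0) * a k := by
    rw [hS, Finset.sum_congr rfl hterm, Finset.sum_comm]
    refine Finset.sum_congr rfl fun k hk => ?_
    rw [Finset.sum_comm]
    refine Finset.sum_congr rfl fun p hp => ?_
    rw [Finset.sum_comm]
    refine Finset.sum_congr rfl fun q hq => ?_
    rw [← Finset.sum_mul, ← Finset.mul_sum, hgeo p hp q hq k hk]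
  -- Step 3: counting
  have hS2 : S = ∑ k ∈ range (d + 1), (k * N) • (x ^ k * a k) := by
    rw [hSid]
    refine Finset.sum_congr rfl fun k hk => ?_
    rw [mem_range] at hk
    calc ∑ p ∈ range d, ∑ q ∈ range d,
          x ^ k * (if c p q k = 0 then (N • (1 : Quaternion ℝ)) else 0) * a k
        = ∑ p ∈ range d, ∑ q ∈ range d,
            (if p + k = d + q then N • (x ^ k * a k) else 0) := by
          refine Finset.sum_congr rfl fun p _ => Finset.sum_congr rfl fun q _ => ?_
          have hiff : (c p q k = 0) ↔ (p + k = d + q) := by simp only [hc]; omega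
          by_cases h : p + k = d + q
          · rw [if_pos (hiff.mpr h), if_pos h, mul_smul_comm, mul_one, smul_mul_assoc]
          · rw [if_neg (fun hh => h (hiff.mp hh)), if_neg h, mul_zero, zero_mul]
      _ = (k * N) • (x ^ k * a k) := by rw [count_pq d k (by omega), smul_smul]
  -- Step 4: norm computations
  have hDstar : ∀ j : ℕ, Dj j * star (Dj j) = ((normSq (Dj j) : ℝ) : Quaternion ℝ) :=
    fun j => Quaternion.self_mul_star (Dj j)
  have hsumNormSq : ∑ j ∈ range N, normSq (Dj j) = (d : ℝ) * N := by
    have hDD : ∀ j : ℕ, Dj j * star (Dj j)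
        = ∑ p ∈ range d, ∑ q ∈ range d, (E u ((((p:ℤ) - (q:ℤ) : ℤ) : ℝ) * θ)) ^ j := by
      intro j
      rw [hstarD j]
      simp only [hDj]
      rw [Finset.sum_mul_sum]
      refine Finset.sum_congr rfl fun p _ => Finset.sum_congr rfl fun q _ => ?_
      rw [E_add huu, E_pow huu]
      congr 1
      push_cast
      ring
    have hsum : ∑ j ∈ range N, Dj j * star (Dj j) = (d * N) • (1 : Quaternion ℝ) := by
      calc ∑ j ∈ range N, Dj j * star (Dj j)
          = ∑ j ∈ range N, ∑ p ∈ range d, ∑ q ∈ range d,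
              (E u ((((p:ℤ) - (q:ℤ) : ℤ) : ℝ) * θ)) ^ j :=
            Finset.sum_congr rfl (fun j _ => hDD j)
        _ = ∑ p ∈ range d, ∑ q ∈ range d, ∑ j ∈ range N,
              (E u ((((p:ℤ) - (q:ℤ) : ℤ) : ℝ) * θ)) ^ j := by
            rw [Finset.sum_comm]
            exact Finset.sum_congr rfl fun p _ => Finset.sum_comm
        _ = ∑ p ∈ range d, ∑ q ∈ range d,
              (if ((p:ℤ) - (q:ℤ) : ℤ) = 0 then (N • (1 : Quaternion ℝ)) else 0) := by
            refine Finset.sum_congr rfl fun p hp => Finset.sum_congr rfl fun q hq => ?_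
            rw [mem_range] at hp hq
            rw [hθ]
            exact geom_E huu hure N hNpos _ (by omega)
        _ = d • (N • (1 : Quaternion ℝ)) := count_diag d _
        _ = (d * N) • (1 : Quaternion ℝ) := by rw [smul_smul]
    calc ∑ j ∈ range N, normSq (Dj j)
        = ∑ j ∈ range N, (Dj j * star (Dj j)).re := by
          refine Finset.sum_congr rfl fun j _ => ?_
          rw [hDstar j]
          exact (Quaternion.re_coe _).symm
      _ = (∑ j ∈ range N, Dj j * star (Dj j)).re := (re_sum _ _).symm
      _ = ((d * N) • (1 : Quaternion ℝ)).re := by rw [hsum]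
      _ = (d : ℝ) * N := by
          rw [nsmul_eq_mul, mul_one,
            show ((d * N : ℕ) : Quaternion ℝ) = (((d * N : ℕ) : ℝ) : Quaternion ℝ) from by norm_cast,
            Quaternion.re_coe]
          push_cast
          ring
  have hSnorm : ‖S‖ ≤ ((d : ℝ) * N) * M := by
    calc ‖S‖ ≤ ∑ j ∈ range N,
          ‖E u (-((d : ℝ) * ((j : ℝ) * θ))) * (Dj j * star (Dj j)) * Pj j‖ := by
          rw [hS]; exact norm_sum_le _ _
      _ ≤ ∑ j ∈ range N, normSq (Dj j) * M := by
          refine Finset.sum_le_sum fun j hj => ?_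
          rw [norm_mul, norm_mul, E_norm huu hure, one_mul, hDstar j, Quaternion.norm_coe]
          have h1 : ‖Pj j‖ ≤ M := by
            have hy : ‖x * E u ((j : ℝ) * θ)‖ = 1 := by
              rw [norm_mul, hx, E_norm huu hure, one_mul]
            simpa only [hPj] using hM _ hy
          have h2 : (0 : ℝ) ≤ normSq (Dj j) := by
            rw [Quaternion.normSq_eq_norm_mul_self]
            positivity
          rw [Real.norm_eq_abs, abs_of_nonneg h2]
          exact mul_le_mul_of_nonneg_left h1 h2
      _ = ((d : ℝ) * N) * M := by rw [← Finset.sum_mul, hsumNormSq]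
  -- Step 5: conclude
  have hSN : S = N • (∑ k ∈ range (d + 1), ((k : ℕ) : Quaternion ℝ) * (x ^ k * a k)) := by
    rw [hS2, Finset.smul_sum]
    refine Finset.sum_congr rfl fun k _ => ?_
    rw [← nsmul_eq_mul, smul_smul, Nat.mul_comm]
  have hnormNT : ‖S‖
      = (N : ℝ) * ‖∑ k ∈ range (d + 1), ((k : ℕ) : Quaternion ℝ) * (x ^ k * a k)‖ := by
    rw [hSN, nsmul_eq_mul, norm_mul]
    congr 1
    rw [show ((N : ℕ) : Quaternion ℝ) = ((N : ℝ) : Quaternion ℝ) by push_cast; rfl,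
      Quaternion.norm_coe, Real.norm_eq_abs, abs_of_nonneg (by positivity)]
  have hNr : (0 : ℝ) < N := by positivity
  have hfin : (N : ℝ) * ‖∑ k ∈ range (d + 1), ((k : ℕ) : Quaternion ℝ) * (x ^ k * a k)‖
      ≤ (N : ℝ) * ((d : ℝ) * M) := by
    rw [← hnormNT]
    calc ‖S‖ ≤ ((d : ℝ) * N) * M := hSnorm
      _ = (N : ℝ) * ((d : ℝ) * M) := by ring
  exact le_of_mul_le_mul_left hfin hNr

end BernAux

open Quaternion Finset BernAux in
/-- **Bernstein inequality via Chebyshev polynomials of the second kind.**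
If `P(X) = Σ_{k=0}^d X^k a_k` satisfies `‖P(x)‖ ≤ M` on the unit sphere of `ℍ`, then for
all `x` with `‖x‖ = 1`, writing `x₀ = Re x`,
`‖Σ_{k=0}^{d-1} (U_k(x₀) − x̄ U_{k-1}(x₀)) (k+1) a_{k+1}‖ ≤ d·M`
(where `U_{-1} = 0`). -/
theorem bernstein_chebyshev (d : ℕ) (a : ℕ → Quaternion ℝ) (M : ℝ)
    (hM : ∀ x : Quaternion ℝ, ‖x‖ = 1 →
      ‖∑ k ∈ Finset.range (d + 1), x ^ k * a k‖ ≤ M) :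
    ∀ x : Quaternion ℝ, ‖x‖ = 1 →
      ‖∑ k ∈ Finset.range d,
          ((((Polynomial.Chebyshev.U ℝ (k : ℤ)).eval x.re : ℝ) : Quaternion ℝ) -
            star x * (((Polynomial.Chebyshev.U ℝ ((k : ℤ) - 1)).eval x.re : ℝ) : Quaternion ℝ)) *
          (((k + 1 : ℕ) : Quaternion ℝ) * a (k + 1))‖ ≤ d * M := by
  intro x hx
  have hrw : ∀ k ∈ Finset.range d,
      ((((Polynomial.Chebyshev.U ℝ (k : ℤ)).eval x.re : ℝ) : Quaternion ℝ) -
        star x * (((Polynomial.Chebyshev.U ℝ ((k : ℤ) - 1)).eval x.re : ℝ) : Quaternion ℝ)) *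
        (((k + 1 : ℕ) : Quaternion ℝ) * a (k + 1))
      = x ^ k * (((k + 1 : ℕ) : Quaternion ℝ) * a (k + 1)) := fun k _ => by
    rw [← BernAux.cheb_pow x hx k]
  rw [Finset.sum_congr rfl hrw]
  have hxL : x * ∑ k ∈ Finset.range d, x ^ k * (((k + 1 : ℕ) : Quaternion ℝ) * a (k + 1))
      = ∑ k ∈ Finset.range (d + 1), ((k : ℕ) : Quaternion ℝ) * (x ^ k * a k) := by
    rw [Finset.mul_sum, Finset.sum_range_succ']
    simp only [Nat.cast_zero, zero_mul, add_zero]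
    refine Finset.sum_congr rfl fun k _ => ?_
    rw [← mul_assoc, ← pow_succ', ← mul_assoc,
      ← (Nat.cast_commute (k + 1) (x ^ (k + 1))).eq, mul_assoc]
  have hkey := BernAux.key_bound d a M hM x hx
  rw [← hxL, norm_mul, hx, one_mul] at hkey
  exact hkey
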